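/- Let Π ⊆ ℝⁿ be a nonempty closed convex set, x ∈ Π, v ∈ ℝⁿ, and 0 < μ_min ≤ μ ≤ μ̃. Let G ∈ ℝ^{n×n} be symmetric positive semidefinite with spectral norm ‖G‖₂ ≤ c̄, define r := μ[x − proj_Π(x − μ⁻¹v)] and R(y) := μ[y − proj_Π(y − μ⁻¹(G(y − x) + v))], and assume r ≠ 0 and G ⪰ b₁‖r‖^σ I for some b₁ > 0, σ ∈ (0,1/2). If y ∈ ℝⁿ satisfies ‖R(y)‖ ≤ (1/2)‖r‖, then with d := y − x: (1/(4μ̃ + 2c̄))·‖r‖ ≤ ‖d‖ ≤ (3/2)(1 + μ_min⁻¹c̄)·b₁⁻¹·‖r‖^{1−σ}. -/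

import Mathlib

noncomputable section

/-- Identity reinterpretation of a coordinate vector as a point of Euclidean space. -/
def toEuc {n : ℕ} (v : Fin n → ℝ) : EuclideanSpace ℝ (Fin n) := WithLp.toLp 2 v

/-- The Euclidean projection onto a (nonempty closed convex) set `S`. -/
def projCC {n : ℕ} (S : Set (EuclideanSpace ℝ (Fin n))) (w : EuclideanSpace ℝ (Fin n)) :
    EuclideanSpace ℝ (Fin n) :=
  Classical.epsilon (fun y => y ∈ S ∧ ∀ z ∈ S, ‖y - w‖ ≤ ‖z - w‖)

open InnerProductSpace

lemma projCC_mem_char {n : ℕ} {Pc : Set (EuclideanSpace ℝ (Fin n))}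
    (hne : Pc.Nonempty) (hcl : IsClosed Pc) (hconv : Convex ℝ Pc)
    (w : EuclideanSpace ℝ (Fin n)) :
    projCC Pc w ∈ Pc ∧ ∀ z ∈ Pc, ⟪w - projCC Pc w, z - projCC Pc w⟫_ℝ ≤ 0 := by
  obtain ⟨p, hp, hmin⟩ := exists_norm_eq_iInf_of_complete_convex hne hcl.isComplete hconv w
  have : Nonempty Pc := hne.to_subtype
  have hbdd : BddBelow (Set.range fun z : Pc => ‖w - ↑z‖) :=
    ⟨0, by rintro _ ⟨z, rfl⟩; exact norm_nonneg _⟩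
  have hex : ∃ q, q ∈ Pc ∧ ∀ z ∈ Pc, ‖q - w‖ ≤ ‖z - w‖ := by
    refine ⟨p, hp, fun z hz => ?_⟩
    rw [norm_sub_rev, norm_sub_rev z, hmin]
    exact ciInf_le hbdd ⟨z, hz⟩
  have hsp : projCC Pc w ∈ Pc ∧ ∀ z ∈ Pc, ‖projCC Pc w - w‖ ≤ ‖z - w‖ :=
    Classical.epsilon_spec hex
  refine ⟨hsp.1, ?_⟩
  have heq : ‖w - projCC Pc w‖ = ⨅ z : Pc, ‖w - ↑z‖ := by
    refine le_antisymm (le_ciInf fun z => ?_) (ciInf_le hbdd ⟨_, hsp.1⟩)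
    rw [norm_sub_rev, norm_sub_rev w]
    exact hsp.2 z z.2
  exact (norm_eq_iInf_iff_real_inner_le_zero hconv hsp.1).mp heq

lemma projCC_nonexp {n : ℕ} {Pc : Set (EuclideanSpace ℝ (Fin n))}
    (hne : Pc.Nonempty) (hcl : IsClosed Pc) (hconv : Convex ℝ Pc)
    (w₁ w₂ : EuclideanSpace ℝ (Fin n)) :
    ‖projCC Pc w₁ - projCC Pc w₂‖ ≤ ‖w₁ - w₂‖ := by
  obtain ⟨hm₁, hc₁⟩ := projCC_mem_char hne hcl hconv w₁
  obtain ⟨hm₂, hc₂⟩ := projCC_mem_char hne hcl hconv w₂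
  set p₁ := projCC Pc w₁
  set p₂ := projCC Pc w₂
  have h1 := hc₁ p₂ hm₂
  have h2 := hc₂ p₁ hm₁
  have e1 : ⟪w₁ - p₁, p₂ - p₁⟫_ℝ = -⟪w₁ - p₁, p₁ - p₂⟫_ℝ := by
    rw [← neg_sub p₁ p₂, inner_neg_right]
  have expand : ⟪w₁ - w₂, p₁ - p₂⟫_ℝ - ⟪p₁ - p₂, p₁ - p₂⟫_ℝ
      = ⟪w₁ - p₁, p₁ - p₂⟫_ℝ - ⟪w₂ - p₂, p₁ - p₂⟫_ℝ := by
    simp only [inner_sub_left]; ring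
  have hsq : ⟪p₁ - p₂, p₁ - p₂⟫_ℝ = ‖p₁ - p₂‖ ^ 2 := real_inner_self_eq_norm_sq _
  have key : ‖p₁ - p₂‖ ^ 2 ≤ ⟪w₁ - w₂, p₁ - p₂⟫_ℝ := by
    rw [e1] at h1; linarith
  have hle := real_inner_le_norm (w₁ - w₂) (p₁ - p₂)
  nlinarith [norm_nonneg (p₁ - p₂), norm_nonneg (w₁ - w₂)]

lemma inner_euc {n : ℕ} (a b : EuclideanSpace ℝ (Fin n)) :
    ⟪a, b⟫_ℝ = dotProduct (a : Fin n → ℝ) b := by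
  simp [PiLp.inner_apply, RCLike.inner_apply, dotProduct, mul_comm]

lemma psd_lower {n : ℕ} {M : Matrix (Fin n) (Fin n) ℝ} {c : ℝ}
    (h : (M - c • (1 : Matrix (Fin n) (Fin n) ℝ)).PosSemidef) (u : EuclideanSpace ℝ (Fin n)) :
    c * ‖u‖ ^ 2 ≤ ⟪toEuc (M.mulVec u), u⟫_ℝ := by
  have h0 := h.dotProduct_mulVec_nonneg u
  rw [Matrix.sub_mulVec, Matrix.smul_mulVec, Matrix.one_mulVec] at h0
  rw [star_trivial, dotProduct_sub] at h0
  have h1 : dotProduct (u : Fin n → ℝ) (c • (u : Fin n → ℝ)) = c * ⟪u, u⟫_ℝ := by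
    rw [dotProduct_smul, smul_eq_mul, inner_euc]
  have h2 : dotProduct (u : Fin n → ℝ) (M.mulVec u) = ⟪toEuc (M.mulVec u), u⟫_ℝ := by
    rw [inner_euc]
    simp [dotProduct, toEuc, mul_comm]
  rw [real_inner_self_eq_norm_sq] at h1
  linarith [h0, h1 ▸ h0]

set_option maxHeartbeats 1600000 in
/-- with `r = μ[x − proj_Π(x − μ⁻¹v)] ≠ 0`,
`R(y) = μ[y − proj_Π(y − μ⁻¹(G(y−x) + v))]`, `‖G‖₂ ≤ c̄` (i.e. `‖Gw‖ ≤ c̄‖w‖` for all `w`)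
and `G ⪰ b₁‖r‖^σ I`, if `‖R(y)‖ ≤ (1/2)‖r‖` then, with `d = y − x`,
`(1/(4μ̃ + 2c̄))‖r‖ ≤ ‖d‖ ≤ (3/2)(1 + μ_min⁻¹c̄)b₁⁻¹‖r‖^{1−σ}`. -/
theorem stmt13 {n : ℕ}
    (Pc : Set (EuclideanSpace ℝ (Fin n))) (hPcne : Pc.Nonempty) (hPccl : IsClosed Pc)
    (hPcconv : Convex ℝ Pc)
    (x : EuclideanSpace ℝ (Fin n)) (hx : x ∈ Pc)
    (v : EuclideanSpace ℝ (Fin n))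
    (μmin μ μtil : ℝ) (hμmin : 0 < μmin) (hμ1 : μmin ≤ μ) (hμ2 : μ ≤ μtil)
    (G : Matrix (Fin n) (Fin n) ℝ) (hGsym : G.IsSymm) (hGpsd : G.PosSemidef)
    (cbar : ℝ) (hGnorm : ∀ w : Fin n → ℝ, ‖toEuc (G.mulVec w)‖ ≤ cbar * ‖toEuc w‖)
    (b1 σ : ℝ) (hb1 : 0 < b1) (hσ : 0 < σ ∧ σ < 1 / 2)
    (r : EuclideanSpace ℝ (Fin n))
    (hrdef : r = μ • (x - projCC Pc (x - μ⁻¹ • v)))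
    (hrne : r ≠ 0)
    (hGlb : (G - (b1 * ‖r‖ ^ σ) • (1 : Matrix (Fin n) (Fin n) ℝ)).PosSemidef)
    (R : EuclideanSpace ℝ (Fin n) → EuclideanSpace ℝ (Fin n))
    (hRdef : ∀ w, R w = μ • (w - projCC Pc (w - μ⁻¹ • (toEuc (G.mulVec (w - x)) + v))))
    (y : EuclideanSpace ℝ (Fin n)) (hy : ‖R y‖ ≤ 1 / 2 * ‖r‖) :
    1 / (4 * μtil + 2 * cbar) * ‖r‖ ≤ ‖y - x‖ ∧
      ‖y - x‖ ≤ 3 / 2 * (1 + μmin⁻¹ * cbar) * b1⁻¹ * ‖r‖ ^ (1 - σ) := by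
  have hμ : 0 < μ := lt_of_lt_of_le hμmin hμ1
  have hμne : μ ≠ 0 := hμ.ne'
  have hμinv : 0 < μ⁻¹ := inv_pos.mpr hμ
  have hrpos : 0 < ‖r‖ := norm_pos_iff.mpr hrne
  set d : EuclideanSpace ℝ (Fin n) := y - x with hd
  set Gd : EuclideanSpace ℝ (Fin n) := toEuc (G.mulVec d) with hGdd
  set w1 : EuclideanSpace ℝ (Fin n) := x - μ⁻¹ • v with hw1
  set w2 : EuclideanSpace ℝ (Fin n) := y - μ⁻¹ • (Gd + v) with hw2
  set p : EuclideanSpace ℝ (Fin n) := projCC Pc w1 with hp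
  set q : EuclideanSpace ℝ (Fin n) := projCC Pc w2 with hq
  obtain ⟨hpmem, hpchar⟩ := projCC_mem_char hPcne hPccl hPcconv w1
  obtain ⟨hqmem, hqchar⟩ := projCC_mem_char hPcne hPccl hPcconv w2
  rw [← hp] at hpmem hpchar
  rw [← hq] at hqmem hqchar
  clear_value d Gd w1 w2 p q
  have hsdef : R y = μ • (y - q) := by rw [hRdef y, ← WithLp.ofLp_sub (x := y) (y := x), ← hd, ← hGdd, ← hw2, ← hq]
  have hxp : x - p = μ⁻¹ • r := by rw [hrdef, inv_smul_smul₀ hμne]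
  have hyq : y - q = μ⁻¹ • R y := by rw [hsdef, inv_smul_smul₀ hμne]
  have hpx : p = x - μ⁻¹ • r := by rw [← hxp]; abel
  have hqy : q = y - μ⁻¹ • R y := by rw [← hyq]; abel
  have hGdle : ‖Gd‖ ≤ cbar * ‖d‖ := by
    have h := hGnorm d
    rw [← hGdd] at h
    simp only [toEuc, WithLp.toLp_ofLp] at h
    exact h
  -- d ≠ 0
  have hdne : d ≠ 0 := by
    intro h0
    have hyx : y = x := by
      have : y - x = 0 := by rw [← hd, h0]
      exact sub_eq_zero.mp this
    have hGd0 : Gd = 0 := by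
      rw [hGdd, h0]
      ext i
      simp [toEuc, Matrix.mulVec, dotProduct]
    have hww : w2 = w1 := by rw [hw2, hw1, hyx, hGd0, zero_add]
    have hRr : R y = r := by
      rw [hsdef, hq, hww, ← hp, hyx, ← hrdef]
    rw [hRr] at hy
    linarith
  have hdpos : 0 < ‖d‖ := norm_pos_iff.mpr hdne
  have hcbar : 0 ≤ cbar := by
    have h := le_trans (norm_nonneg Gd) hGdle
    nlinarith
  -- ===== Lower bound =====
  have hrs_id : r - R y = μ • (-d + (q - p)) := by
    rw [hrdef, hsdef, hd]; module
  have hpq : ‖q - p‖ ≤ ‖w2 - w1‖ := by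
    rw [hp, hq]; exact projCC_nonexp hPcne hPccl hPcconv w2 w1
  have hw21 : w2 - w1 = d - μ⁻¹ • Gd := by rw [hw1, hw2, hd]; module
  have hw21n : ‖w2 - w1‖ ≤ ‖d‖ + μ⁻¹ * ‖Gd‖ := by
    rw [hw21]
    calc ‖d - μ⁻¹ • Gd‖ ≤ ‖d‖ + ‖μ⁻¹ • Gd‖ := norm_sub_le _ _
      _ = ‖d‖ + μ⁻¹ * ‖Gd‖ := by
        rw [norm_smul, Real.norm_eq_abs, abs_of_pos hμinv]
  have hrs : ‖r - R y‖ ≤ (2 * μ + cbar) * ‖d‖ := by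
    rw [hrs_id, norm_smul, Real.norm_eq_abs, abs_of_pos hμ]
    have h1 : ‖-d + (q - p)‖ ≤ ‖d‖ + ‖w2 - w1‖ := by
      calc ‖-d + (q - p)‖ ≤ ‖-d‖ + ‖q - p‖ := norm_add_le _ _
        _ = ‖d‖ + ‖q - p‖ := by rw [norm_neg]
        _ ≤ ‖d‖ + ‖w2 - w1‖ := by linarith
    have s2 : ‖w2 - w1‖ ≤ ‖d‖ + μ⁻¹ * (cbar * ‖d‖) := by
      have := mul_le_mul_of_nonneg_left hGdle hμinv.le
      linarith
    have s1 : μ * ‖-d + (q - p)‖ ≤ μ * (‖d‖ + (‖d‖ + μ⁻¹ * (cbar * ‖d‖))) := by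
      apply mul_le_mul_of_nonneg_left _ hμ.le
      linarith
    have s3 : μ * (‖d‖ + (‖d‖ + μ⁻¹ * (cbar * ‖d‖))) = 2 * μ * ‖d‖ + cbar * ‖d‖ := by
      field_simp
      ring
    linarith
  have hlow : 1 / 2 * ‖r‖ ≤ (2 * μtil + cbar) * ‖d‖ := by
    have htri : ‖r‖ - ‖R y‖ ≤ ‖r - R y‖ := norm_sub_norm_le r (R y)
    have hmono : (2 * μ + cbar) * ‖d‖ ≤ (2 * μtil + cbar) * ‖d‖ := by
      apply mul_le_mul_of_nonneg_right _ (norm_nonneg _)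
      linarith
    linarith
  have hApos : 0 < 4 * μtil + 2 * cbar := by linarith
  constructor
  · rw [div_mul_eq_mul_div, one_mul, div_le_iff₀ hApos]
    have he : ‖d‖ * (4 * μtil + 2 * cbar) = 2 * ((2 * μtil + cbar) * ‖d‖) := by ring
    rw [he]
    linarith
  -- ===== Upper bound =====
  · set t : EuclideanSpace ℝ (Fin n) := r - R y with ht
    set a : EuclideanSpace ℝ (Fin n) := d + μ⁻¹ • t with ha
    clear_value t a
    have hid1 : w2 - q = μ⁻¹ • (R y - Gd - v) := by rw [hw2, hqy]; module
    have hid2 : w1 - p = μ⁻¹ • (r - v) := by rw [hw1, hpx]; module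
    have hid3 : p - q = -a := by rw [hpx, hqy, ha, ht, hd]; module
    have hid4 : q - p = a := by rw [hpx, hqy, ha, ht, hd]; module
    have hA : 0 ≤ ⟪R y - Gd - v, a⟫_ℝ := by
      have h := hqchar p hpmem
      rw [hid1, hid3, real_inner_smul_left, inner_neg_right] at h
      have h2 := le_of_mul_le_mul_left (by linarith : μ⁻¹ * -⟪R y - Gd - v, a⟫_ℝ ≤ μ⁻¹ * 0) hμinv
      linarith
    have hB : ⟪r - v, a⟫_ℝ ≤ 0 := by
      have h := hpchar q hqmem
      rw [hid2, hid4, real_inner_smul_left] at h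
      have h2 := le_of_mul_le_mul_left (by linarith : μ⁻¹ * ⟪r - v, a⟫_ℝ ≤ μ⁻¹ * 0) hμinv
      linarith
    have hkey : ⟪Gd + t, a⟫_ℝ ≤ 0 := by
      have expand : ⟪Gd + t, a⟫_ℝ = ⟪r - v, a⟫_ℝ - ⟪R y - Gd - v, a⟫_ℝ := by
        rw [ht]; simp only [inner_add_left, inner_sub_left]; ring
      rw [expand]; linarith
    have hexp : ⟪Gd, d⟫_ℝ + μ⁻¹ * ⟪Gd, t⟫_ℝ + ⟪t, d⟫_ℝ + μ⁻¹ * ⟪t, t⟫_ℝ ≤ 0 := by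
      have e : ⟪Gd + t, a⟫_ℝ
          = ⟪Gd, d⟫_ℝ + μ⁻¹ * ⟪Gd, t⟫_ℝ + ⟪t, d⟫_ℝ + μ⁻¹ * ⟪t, t⟫_ℝ := by
        rw [ha]
        simp only [inner_add_left, inner_add_right, real_inner_smul_right]
        ring
      rw [e] at hkey; exact hkey
    have htt : 0 ≤ ⟪t, t⟫_ℝ := real_inner_self_nonneg
    have hGt : -(‖Gd‖ * ‖t‖) ≤ ⟪Gd, t⟫_ℝ :=
      neg_le_of_abs_le (abs_real_inner_le_norm Gd t)
    have htd : -(‖t‖ * ‖d‖) ≤ ⟪t, d⟫_ℝ :=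
      neg_le_of_abs_le (abs_real_inner_le_norm t d)
    have htb : ‖t‖ ≤ 3 / 2 * ‖r‖ := by
      rw [ht]
      calc ‖r - R y‖ ≤ ‖r‖ + ‖R y‖ := norm_sub_le _ _
        _ ≤ 3 / 2 * ‖r‖ := by linarith
    have hGlower := psd_lower hGlb d
    rw [← hGdd] at hGlower
    -- combine: b1‖r‖^σ ‖d‖² ≤ ⟪Gd,d⟫ ≤ μ⁻¹‖Gd‖‖t‖ + ‖t‖‖d‖ ≤ (1+μ⁻¹cbar)‖d‖ (3/2)‖r‖
    have hmul1 : μ⁻¹ * -(‖Gd‖ * ‖t‖) ≤ μ⁻¹ * ⟪Gd, t⟫_ℝ :=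
      mul_le_mul_of_nonneg_left hGt (le_of_lt hμinv)
    have hmul2 : 0 ≤ μ⁻¹ * ⟪t, t⟫_ℝ := mul_nonneg (le_of_lt hμinv) htt
    have hstep : b1 * ‖r‖ ^ σ * ‖d‖ ^ 2 ≤ (1 + μ⁻¹ * cbar) * ‖d‖ * (3 / 2 * ‖r‖) := by
      have h1 : ⟪Gd, d⟫_ℝ ≤ μ⁻¹ * (‖Gd‖ * ‖t‖) + ‖t‖ * ‖d‖ := by linarith
      have h2 : μ⁻¹ * (‖Gd‖ * ‖t‖) ≤ μ⁻¹ * (cbar * ‖d‖ * ‖t‖) := by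
        apply mul_le_mul_of_nonneg_left _ (le_of_lt hμinv)
        exact mul_le_mul_of_nonneg_right hGdle (norm_nonneg t)
      have h3 : μ⁻¹ * (cbar * ‖d‖ * ‖t‖) ≤ μ⁻¹ * (cbar * ‖d‖ * (3 / 2 * ‖r‖)) := by
        apply mul_le_mul_of_nonneg_left _ (le_of_lt hμinv)
        exact mul_le_mul_of_nonneg_left htb (mul_nonneg hcbar (norm_nonneg d))
      have h4 : ‖t‖ * ‖d‖ ≤ 3 / 2 * ‖r‖ * ‖d‖ :=
        mul_le_mul_of_nonneg_right htb (norm_nonneg d)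
      linarith [hGlower, h1, h2, h3, h4]
    have hrσ : 0 < ‖r‖ ^ σ := Real.rpow_pos_of_pos hrpos σ
    have hsplit : ‖r‖ ^ σ * ‖r‖ ^ (1 - σ) = ‖r‖ := by
      rw [← Real.rpow_add hrpos]; norm_num
    have hstep2 : b1 * ‖r‖ ^ σ * ‖d‖ ≤ 3 / 2 * (1 + μ⁻¹ * cbar) * (‖r‖ ^ σ * ‖r‖ ^ (1 - σ)) := by
      rw [hsplit]
      have h5 : b1 * ‖r‖ ^ σ * ‖d‖ * ‖d‖ ≤ 3 / 2 * (1 + μ⁻¹ * cbar) * ‖r‖ * ‖d‖ := by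
        linarith only [hstep]
      exact le_of_mul_le_mul_right h5 hdpos
    have hμcomp : μ⁻¹ ≤ μmin⁻¹ := by
      apply inv_anti₀ hμmin hμ1
    have hfin : b1 * ‖r‖ ^ σ * ‖d‖
        ≤ b1 * ‖r‖ ^ σ * (3 / 2 * (1 + μmin⁻¹ * cbar) * b1⁻¹ * ‖r‖ ^ (1 - σ)) := by
      have hr1σ : 0 < ‖r‖ ^ (1 - σ) := Real.rpow_pos_of_pos hrpos _
      have hb1i : b1 * b1⁻¹ = 1 := mul_inv_cancel₀ hb1.ne'
      have hcomp : 3 / 2 * (1 + μ⁻¹ * cbar) * (‖r‖ ^ σ * ‖r‖ ^ (1 - σ))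
          ≤ 3 / 2 * (1 + μmin⁻¹ * cbar) * (‖r‖ ^ σ * ‖r‖ ^ (1 - σ)) := by
        have h6 : 1 + μ⁻¹ * cbar ≤ 1 + μmin⁻¹ * cbar := by
          have := mul_le_mul_of_nonneg_right hμcomp hcbar
          linarith only [this]
        have h7 := mul_le_mul_of_nonneg_right h6 (le_of_lt (mul_pos hrσ hr1σ))
        linarith only [h7]
      have heq : b1 * ‖r‖ ^ σ * (3 / 2 * (1 + μmin⁻¹ * cbar) * b1⁻¹ * ‖r‖ ^ (1 - σ))
          = 3 / 2 * (1 + μmin⁻¹ * cbar) * (‖r‖ ^ σ * ‖r‖ ^ (1 - σ)) := by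
        field_simp
      linarith only [hcomp, heq, hstep2]
    exact le_of_mul_le_mul_left hfin (mul_pos hb1 hrσ)

end
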